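/- Let φ : (0,∞) → ℝ be a C² solution of φ'' + (2/r)φ' = sin(2φ)/r² + (φ - sin φ cos φ)(1 - cos 2φ)/r⁴. Define P(r) = r² φ'(r)² - 2 sin²φ(r) - r⁻²(φ(r) - sin φ(r) cos φ(r))². Then the function Φ(r) := r² P(r) satisfies Φ'(r) = -4r sin² φ(r) for all r > 0. -/

import Mathlib

/-- For a C² solution φ of the stationary Adkins-Nappi equation on (0,∞),
    Φ(r) := r²P(r) = r⁴φ'² - 2r²sin²φ - (φ - sin φ cos φ)² satisfies Φ'(r) = -4r sin²φ(r). -/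
theorem stmt3 (φ φ' φ'' : ℝ → ℝ)
    (h1 : ∀ r : ℝ, 0 < r → HasDerivAt φ (φ' r) r)
    (h2 : ∀ r : ℝ, 0 < r → HasDerivAt φ' (φ'' r) r)
    (hode : ∀ r : ℝ, 0 < r →
      φ'' r + (2 / r) * φ' r =
        Real.sin (2 * φ r) / r ^ 2 +
          (φ r - Real.sin (φ r) * Real.cos (φ r)) * (1 - Real.cos (2 * φ r)) / r ^ 4) :
    ∀ r : ℝ, 0 < r →
      HasDerivAt
        (fun r => r ^ 4 * φ' r ^ 2 - 2 * r ^ 2 * Real.sin (φ r) ^ 2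
          - (φ r - Real.sin (φ r) * Real.cos (φ r)) ^ 2)
        (-4 * r * Real.sin (φ r) ^ 2) r := by
  intro r hr
  have hφ := h1 r hr
  have hφ' := h2 r hr
  have hsin : HasDerivAt (fun r => Real.sin (φ r)) (Real.cos (φ r) * φ' r) r :=
    (Real.hasDerivAt_sin (φ r)).comp r hφ
  have hcos : HasDerivAt (fun r => Real.cos (φ r)) (-Real.sin (φ r) * φ' r) r :=
    (Real.hasDerivAt_cos (φ r)).comp r hφ
  have hid : HasDerivAt (fun r : ℝ => r) 1 r := hasDerivAt_id r
  have h4 : HasDerivAt (fun r : ℝ => r ^ 4) (4 * r ^ 3) r := by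
    simpa using hasDerivAt_pow 4 r
  have h2p : HasDerivAt (fun r : ℝ => r ^ 2) (2 * r) r := by
    simpa using hasDerivAt_pow 2 r
  have hA : HasDerivAt (fun r => r ^ 4 * φ' r ^ 2)
      (4 * r ^ 3 * φ' r ^ 2 + r ^ 4 * (2 * φ' r * φ'' r)) r := by
    have := h4.mul ((hφ'.pow 2))
    exact this.congr_deriv (by simp only [Pi.pow_apply]; ring)
  have hB : HasDerivAt (fun r => 2 * r ^ 2 * Real.sin (φ r) ^ 2)
      (2 * (2 * r) * Real.sin (φ r) ^ 2
        + 2 * r ^ 2 * (2 * Real.sin (φ r) * (Real.cos (φ r) * φ' r))) r := by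
    have := ((h2p.const_mul 2).mul (hsin.pow 2))
    refine this.congr_deriv ?_
    simp only [Pi.pow_apply, Pi.mul_apply, Pi.sub_apply]; ring
  have hC : HasDerivAt (fun r => (φ r - Real.sin (φ r) * Real.cos (φ r)) ^ 2)
      (2 * (φ r - Real.sin (φ r) * Real.cos (φ r))
        * (φ' r - (Real.cos (φ r) * φ' r * Real.cos (φ r)
            + Real.sin (φ r) * (-Real.sin (φ r) * φ' r)))) r := by
    have := ((hφ.sub (hsin.mul hcos)).pow 2)
    refine this.congr_deriv ?_
    simp only [Pi.pow_apply, Pi.mul_apply, Pi.sub_apply]; ring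
  have h := hode r hr
  rw [Real.sin_two_mul, Real.cos_two_mul'] at h
  have hr4 : (r : ℝ) ^ 4 ≠ 0 := by positivity
  have hr2 : (r : ℝ) ^ 2 ≠ 0 := by positivity
  have hrne : (r : ℝ) ≠ 0 := ne_of_gt hr
  have h' : (φ'' r + (2 / r) * φ' r) * r ^ 4 =
      (2 * Real.sin (φ r) * Real.cos (φ r)) * r ^ 2 +
        (φ r - Real.sin (φ r) * Real.cos (φ r)) *
          (1 - (Real.cos (φ r) ^ 2 - Real.sin (φ r) ^ 2)) := by
    rw [h]; field_simp
  have key := (hA.sub hB).sub hC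
  refine key.congr_deriv (Eq.symm ?_)
  have hh : φ'' r * r ^ 4 + 2 * r ^ 3 * φ' r =
      (2 * Real.sin (φ r) * Real.cos (φ r)) * r ^ 2 +
        (φ r - Real.sin (φ r) * Real.cos (φ r)) *
          (1 - (Real.cos (φ r) ^ 2 - Real.sin (φ r) ^ 2)) := by
    rw [← h']; field_simp
  linear_combination (-2 * φ' r) * hh
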